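/- Suppose P is ergodic and reversible with stationary distribution π and mixing time t* = τ(1/4). Then for any vertex w and any T > 0, the visit frequency of the SRT-router model satisfies |X_w^{(T)} − M^{(T)}_w| ≤ 3 π_w t* · max_{u∈V} (δ(u)/π_u), where δ(u) = |N(u)|. -/

import Mathlib

open Finset

private lemma contraction_aux {V : Type*} [Fintype V]
    (ξ g : V → ℝ) (Q : Matrix V V ℝ) (hmass : ∑ z, ξ z = 0)
    (B : ℝ) (hB : ∀ z, ∑ y, |Q z y - g y| ≤ B) :
    ∑ y, |∑ z, ξ z * Q z y| ≤ B * ∑ z, |ξ z| := by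
  have key : ∀ y, (∑ z, ξ z * Q z y) = ∑ z, ξ z * (Q z y - g y) := by
    intro y
    simp only [mul_sub, Finset.sum_sub_distrib, ← Finset.sum_mul, hmass, zero_mul, sub_zero]
  calc ∑ y, |∑ z, ξ z * Q z y| = ∑ y, |∑ z, ξ z * (Q z y - g y)| := by
        exact Finset.sum_congr rfl fun y _ => by rw [key]
    _ ≤ ∑ y, ∑ z, |ξ z| * |Q z y - g y| := by
        refine Finset.sum_le_sum fun y _ => ?_
        refine (Finset.abs_sum_le_sum_abs _ _).trans ?_
        exact Finset.sum_le_sum fun z _ => le_of_eq (abs_mul _ _)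
    _ = ∑ z, |ξ z| * ∑ y, |Q z y - g y| := by
        rw [Finset.sum_comm]
        exact Finset.sum_congr rfl fun z _ => by rw [Finset.mul_sum]
    _ ≤ ∑ z, |ξ z| * B := Finset.sum_le_sum fun z _ =>
        mul_le_mul_of_nonneg_left (hB z) (abs_nonneg _)
    _ = B * ∑ z, |ξ z| := by rw [← Finset.sum_mul, mul_comm]

private lemma pow_entry_nonneg {V : Type*} [Fintype V] [DecidableEq V]
    {P : Matrix V V ℝ} (hP0 : ∀ u v, 0 ≤ P u v) :
    ∀ (t : ℕ) (u v : V), 0 ≤ (P ^ t) u v := by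
  intro t
  induction t with
  | zero => intro u v; simp only [pow_zero, Matrix.one_apply]; positivity
  | succ t ih =>
    intro u v
    rw [pow_succ, Matrix.mul_apply]
    exact Finset.sum_nonneg fun x _ => mul_nonneg (ih u x) (hP0 x v)

private lemma pow_row_sum {V : Type*} [Fintype V] [DecidableEq V]
    {P : Matrix V V ℝ} (hP1 : ∀ u, ∑ v, P u v = 1) :
    ∀ (t : ℕ) (u : V), ∑ v, (P ^ t) u v = 1 := by
  intro t
  induction t with
  | zero => intro u; simp [Matrix.one_apply]
  | succ t ih =>
    intro u
    simp only [pow_succ, Matrix.mul_apply]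
    rw [Finset.sum_comm]
    calc ∑ x, ∑ v, (P ^ t) u x * P x v = ∑ x, (P ^ t) u x * ∑ v, P x v := by
          exact Finset.sum_congr rfl fun x _ => by rw [Finset.mul_sum]
      _ = 1 := by simp only [hP1, mul_one]; exact ih u

private lemma stat_pow {V : Type*} [Fintype V] [DecidableEq V]
    {P : Matrix V V ℝ} {π : V → ℝ} (hstat : ∀ v, ∑ u, π u * P u v = π v) :
    ∀ (t : ℕ) (v : V), ∑ u, π u * (P ^ t) u v = π v := by
  intro t
  induction t with
  | zero => intro v; simp [Matrix.one_apply]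
  | succ t ih =>
    intro v
    simp only [pow_succ, Matrix.mul_apply, Finset.mul_sum]
    rw [Finset.sum_comm]
    calc ∑ x, ∑ u, π u * ((P ^ t) u x * P x v)
        = ∑ x, (∑ u, π u * (P ^ t) u x) * P x v := by
          refine Finset.sum_congr rfl fun x _ => ?_
          rw [Finset.sum_mul]
          exact Finset.sum_congr rfl fun u _ => by ring
      _ = π v := by simp only [ih]; exact hstat v

private lemma rev_pow {V : Type*} [Fintype V] [DecidableEq V]
    {P : Matrix V V ℝ} {π : V → ℝ} (hrev : ∀ u v, π u * P u v = π v * P v u) :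
    ∀ (t : ℕ) (u v : V), π u * (P ^ t) u v = π v * (P ^ t) v u := by
  intro t
  induction t with
  | zero => intro u v; simp only [pow_zero, Matrix.one_apply]; by_cases h : u = v <;> simp [h, Matrix.one_apply, eq_comm]
  | succ t ih =>
    intro u v
    conv_lhs => rw [pow_succ]
    conv_rhs => rw [pow_succ']
    rw [Matrix.mul_apply, Matrix.mul_apply, Finset.mul_sum, Finset.mul_sum]
    refine Finset.sum_congr rfl fun x _ => ?_
    calc π u * ((P ^ t) u x * P x v) = (π u * (P ^ t) u x) * P x v := by ring
      _ = (π x * (P ^ t) x u) * P x v := by rw [ih]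
      _ = (π x * P x v) * (P ^ t) x u := by ring
      _ = (π v * P v x) * (P ^ t) x u := by rw [← hrev]
      _ = π v * (P v x * (P ^ t) x u) := by ring

private def dtv {V : Type*} [Fintype V] [DecidableEq V] (P : Matrix V V ℝ) (π : V → ℝ) (x : V) (t : ℕ) : ℝ :=
  ∑ y, |(P ^ t) x y - π y|

section dtvlemmas
variable {V : Type*} [Fintype V] [DecidableEq V] [Nonempty V]
  {P : Matrix V V ℝ} {π : V → ℝ}
  (hP0 : ∀ u v, 0 ≤ P u v) (hP1 : ∀ u, ∑ v, P u v = 1)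
  (hπpos : ∀ v, 0 < π v) (hπ1 : ∑ v, π v = 1)
  (hstat : ∀ v, ∑ u, π u * P u v = π v)

private lemma dtv_nonneg (x : V) (t : ℕ) : 0 ≤ dtv P π x t :=
  Finset.sum_nonneg fun y _ => abs_nonneg _

include hP0 hP1 hπpos hπ1 in
private lemma dtv_le_two (x : V) (t : ℕ) : dtv P π x t ≤ 2 := by
  have h : ∀ y : V, |(P ^ t) x y - π y| ≤ (P ^ t) x y + π y := by
    intro y
    have h1 := pow_entry_nonneg hP0 t x y
    have h2 := (hπpos y).le
    rw [abs_sub_le_iff]; constructor <;> linarith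
  calc dtv P π x t ≤ ∑ y, ((P ^ t) x y + π y) := Finset.sum_le_sum fun y _ => h y
    _ = 2 := by rw [Finset.sum_add_distrib, pow_row_sum hP1, hπ1]; norm_num

include hP1 hπ1 hstat in
private lemma dtv_contract (x : V) (t m : ℕ) (g : V → ℝ) (B : ℝ)
    (hB : ∀ z, ∑ y, |(P ^ m) z y - g y| ≤ B) :
    dtv P π x (t + m) ≤ B * dtv P π x t := by
  have hmass : ∑ z, ((P ^ t) x z - π z) = 0 := by
    rw [Finset.sum_sub_distrib, pow_row_sum hP1, hπ1, sub_self]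
  have hkey : ∀ y, (P ^ (t + m)) x y - π y = ∑ z, ((P ^ t) x z - π z) * (P ^ m) z y := by
    intro y
    rw [pow_add, Matrix.mul_apply]
    simp only [sub_mul, Finset.sum_sub_distrib]
    rw [stat_pow hstat]
  have := contraction_aux (fun z => (P ^ t) x z - π z) g (P ^ m) hmass B hB
  calc dtv P π x (t + m) = ∑ y, |∑ z, ((P ^ t) x z - π z) * (P ^ m) z y| := by
        exact Finset.sum_congr rfl fun y _ => by rw [hkey]
    _ ≤ B * ∑ z, |(P ^ t) x z - π z| := this
    _ = B * dtv P π x t := rfl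

include hP0 hP1 hπ1 hstat in
private lemma dtv_mono (x : V) {t t' : ℕ} (h : t ≤ t') : dtv P π x t' ≤ dtv P π x t := by
  have hB : ∀ z : V, ∑ y, |(P ^ (t' - t)) z y - (0 : ℝ)| ≤ 1 := by
    intro z
    have : ∀ y : V, |(P ^ (t' - t)) z y - (0:ℝ)| = (P ^ (t' - t)) z y := by
      intro y; rw [sub_zero, abs_of_nonneg (pow_entry_nonneg hP0 _ z y)]
    rw [Finset.sum_congr rfl fun y _ => this y, pow_row_sum hP1]
  have := dtv_contract hP1 hπ1 hstat x t (t' - t) 0 1 hB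
  rw [Nat.add_sub_cancel' h] at this
  linarith [this]
end dtvlemmas
set_option linter.unusedSectionVars false

section mix
variable {V : Type*} [Fintype V] [DecidableEq V] [Nonempty V]
  {P : Matrix V V ℝ} {π : V → ℝ}
  (hP0 : ∀ u v, 0 ≤ P u v) (hP1 : ∀ u, ∑ v, P u v = 1)
  (hπpos : ∀ v, 0 < π v) (hπ1 : ∑ v, π v = 1)
  (hstat : ∀ v, ∑ u, π u * P u v = π v)

include hP0 hP1 hπpos hπ1 hstat in
private lemma mix_sum_bound
    (herg : ∃ t0 : ℕ, ∀ u v, 0 < (P ^ t0) u v)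
    (tstar : ℕ)
    (htstar : tstar = univ.sup fun u =>
      sInf {t : ℕ | (1 / 2) * ∑ v, |(P ^ t) u v - π v| ≤ (1 / 4 : ℝ)}) :
    ∀ (x : V) (N : ℕ), ∑ r ∈ range N, dtv P π x r ≤ 3 * tstar := by
  obtain ⟨t0, ht0⟩ := herg
  set c : ℝ := univ.inf' univ_nonempty (fun p : V × V => (P ^ t0) p.1 p.2) with hc
  have hcpos : 0 < c := by
    rw [hc, Finset.lt_inf'_iff]
    exact fun p _ => ht0 p.1 p.2
  have hcle : ∀ z y : V, c ≤ (P ^ t0) z y := fun z y =>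
    Finset.inf'_le _ (mem_univ ((z, y) : V × V))
  set n : ℕ := Fintype.card V with hn
  have hnc : (n : ℝ) * c ≤ 1 := by
    obtain ⟨z0⟩ := ‹Nonempty V›
    have h1 : ∑ _y : V, c ≤ ∑ y, (P ^ t0) z0 y := Finset.sum_le_sum fun y _ => hcle z0 y
    rw [pow_row_sum hP1] at h1
    simpa [hn, Finset.card_univ, mul_comm] using h1
  have hB3 : ∀ z : V, ∑ y, |(P ^ t0) z y - c| ≤ 1 - n * c := by
    intro z
    have : ∀ y : V, |(P ^ t0) z y - c| = (P ^ t0) z y - c := fun y =>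
      abs_of_nonneg (by linarith [hcle z y])
    rw [Finset.sum_congr rfl fun y _ => this y, Finset.sum_sub_distrib, pow_row_sum hP1]
    simp [hn, Finset.card_univ, mul_comm]
  have hdoeb : ∀ (x : V) (k : ℕ), dtv P π x (k * t0) ≤ 2 * (1 - n * c) ^ k := by
    intro x k
    induction k with
    | zero => simpa using dtv_le_two hP0 hP1 hπpos hπ1 x 0
    | succ k ih =>
      have hstep := dtv_contract hP1 hπ1 hstat x (k * t0) t0 (fun _ => c) (1 - n * c) hB3
      rw [← Nat.succ_mul] at hstep
      have hnn : (0:ℝ) ≤ 1 - n * c := by linarith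
      calc dtv P π x ((k + 1) * t0) ≤ (1 - n * c) * dtv P π x (k * t0) := hstep
        _ ≤ (1 - n * c) * (2 * (1 - n * c) ^ k) := by
            exact mul_le_mul_of_nonneg_left ih hnn
        _ = 2 * (1 - n * c) ^ (k + 1) := by ring
  have hnpos : (1 : ℝ) ≤ (n : ℝ) := by
    have : 0 < n := Fintype.card_pos
    exact_mod_cast this
  have h1 : (1 : ℝ) - n * c < 1 := by nlinarith
  have hmix : ∀ z : V, dtv P π z tstar ≤ 1 / 2 := by
    intro z
    obtain ⟨k, hk⟩ := exists_pow_lt_of_lt_one (show (0:ℝ) < 1/4 by norm_num) h1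
    have hne : (k * t0) ∈ {t : ℕ | (1 / 2) * ∑ v, |(P ^ t) z v - π v| ≤ (1 / 4 : ℝ)} := by
      have hd := hdoeb z k
      have : dtv P π z (k * t0) ≤ 1 / 2 := by linarith
      simp only [Set.mem_setOf_eq]
      show (1/2 : ℝ) * dtv P π z (k * t0) ≤ 1/4
      linarith
    have hmem := Nat.sInf_mem (⟨_, hne⟩ : Set.Nonempty _)
    have hle : sInf {t : ℕ | (1 / 2) * ∑ v, |(P ^ t) z v - π v| ≤ (1 / 4 : ℝ)} ≤ tstar := by
      rw [htstar]
      exact Finset.le_sup (f := fun u =>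
        sInf {t : ℕ | (1 / 2) * ∑ v, |(P ^ t) u v - π v| ≤ (1 / 4 : ℝ)}) (mem_univ z)
    have hmono := dtv_mono hP0 hP1 hπ1 hstat z hle
    have hval : (1/2 : ℝ) * dtv P π z (sInf {t : ℕ | (1 / 2) * ∑ v, |(P ^ t) z v - π v| ≤ (1 / 4 : ℝ)}) ≤ 1/4 := hmem
    linarith
  intro x N
  rcases Nat.eq_zero_or_pos tstar with ht | ht
  · subst ht
    have hz : ∀ r : ℕ, dtv P π x r ≤ 0 := by
      intro r
      have h := dtv_contract hP1 hπ1 hstat x r 0 π (1/2) (fun z => hmix z)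
      simp only [Nat.add_zero] at h
      linarith
    have : ∑ r ∈ range N, dtv P π x r ≤ 0 :=
      Finset.sum_nonpos fun r _ => hz r
    simpa using this
  · have hdecay : ∀ k : ℕ, dtv P π x ((k + 1) * tstar) ≤ (1/2 : ℝ) ^ k * (1/2) := by
      intro k
      induction k with
      | zero => simpa using hmix x
      | succ k ih =>
        have hstep := dtv_contract hP1 hπ1 hstat x ((k+1) * tstar) tstar π (1/2) (fun z => hmix z)
        rw [← Nat.succ_mul] at hstep
        calc dtv P π x ((k + 2) * tstar) ≤ 1/2 * dtv P π x ((k+1) * tstar) := hstep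
          _ ≤ 1/2 * ((1/2 : ℝ) ^ k * (1/2)) := by linarith
          _ = (1/2 : ℝ) ^ (k+1) * (1/2) := by ring
    have hblock : ∀ k : ℕ, ∑ r ∈ range ((k + 1) * tstar), dtv P π x r ≤
        2 * tstar + (1 - (1/2 : ℝ) ^ k) * tstar := by
      intro k
      induction k with
      | zero =>
        have h2 : ∑ r ∈ range (1 * tstar), dtv P π x r ≤ ∑ _r ∈ range (1 * tstar), (2:ℝ) :=
          Finset.sum_le_sum fun r _ => dtv_le_two hP0 hP1 hπpos hπ1 x r
        rw [Finset.sum_const, card_range, nsmul_eq_mul] at h2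
        simp only [Nat.zero_add, one_mul, pow_zero, sub_self, zero_mul, add_zero] at h2 ⊢
        linarith
      | succ k ih =>
        have hle1 : (k + 1) * tstar ≤ (k + 2) * tstar := by
          exact Nat.mul_le_mul_right tstar (by omega)
        have hsplit : ∑ r ∈ range ((k + 1) * tstar), dtv P π x r
            + ∑ r ∈ Ico ((k + 1) * tstar) ((k + 2) * tstar), dtv P π x r
            = ∑ r ∈ range ((k + 2) * tstar), dtv P π x r := by
          rw [Finset.range_eq_Ico, Finset.range_eq_Ico]
          exact Finset.sum_Ico_consecutive (fun r => dtv P π x r) (Nat.zero_le _) hle1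
        have hIco : ∑ r ∈ Ico ((k + 1) * tstar) ((k + 2) * tstar), dtv P π x r ≤
            (tstar : ℝ) * ((1/2) ^ k * (1/2)) := by
          have hb : ∀ r ∈ Ico ((k + 1) * tstar) ((k + 2) * tstar),
              dtv P π x r ≤ (1/2 : ℝ) ^ k * (1/2) := by
            intro r hr
            rw [Finset.mem_Ico] at hr
            exact (dtv_mono hP0 hP1 hπ1 hstat x hr.1).trans (hdecay k)
          calc ∑ r ∈ Ico ((k + 1) * tstar) ((k + 2) * tstar), dtv P π x r
              ≤ ∑ _r ∈ Ico ((k + 1) * tstar) ((k + 2) * tstar), ((1/2:ℝ) ^ k * (1/2)) :=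
                Finset.sum_le_sum hb
            _ = (tstar : ℝ) * ((1/2) ^ k * (1/2)) := by
                rw [Finset.sum_const, Nat.card_Ico, nsmul_eq_mul]
                congr 1
                have : (k + 2) * tstar - (k + 1) * tstar = tstar := by
                  have h2 : (k + 2) * tstar = (k + 1) * tstar + tstar := by ring
                  omega
                rw [this]
        have hp : (1/2 : ℝ) ^ (k+1) = (1/2 : ℝ) ^ k * (1/2) := by ring
        rw [← hsplit]
        rw [hp]
        linarith
    have hNsub : N ≤ (N + 1) * tstar := by
      calc N ≤ N + 1 := by omega
        _ = (N + 1) * 1 := by omega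
        _ ≤ (N + 1) * tstar := Nat.mul_le_mul_left _ ht
    have hsub : ∑ r ∈ range N, dtv P π x r ≤ ∑ r ∈ range ((N + 1) * tstar), dtv P π x r :=
      Finset.sum_le_sum_of_subset_of_nonneg (Finset.range_subset_range.mpr hNsub)
        (fun r _ _ => dtv_nonneg x r)
    have hfin := hblock N
    have hpow : (0:ℝ) ≤ (1/2 : ℝ) ^ N := by positivity
    have htr : (0:ℝ) ≤ (tstar : ℝ) := Nat.cast_nonneg _
    nlinarith
end mix

private def cntf {V : Type*} [DecidableEq V] (σ : V → ℕ → V) (v u : V) (z : ℕ) : ℕ :=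
  ((range z).filter (fun j => σ v j = u)).card

private lemma cntf_add {V : Type*} [DecidableEq V] (σ : V → ℕ → V) (v u : V) (a b : ℕ) :
    cntf σ v u (a + b) = cntf σ v u a + ((range b).filter (fun j => σ v (a + j) = u)).card := by
  induction b with
  | zero => simp [cntf]
  | succ b ih =>
    unfold cntf at *
    rw [show a + (b + 1) = (a + b) + 1 from rfl, range_add_one, filter_insert,
      range_add_one (n := b), filter_insert]
    by_cases h : σ v (a + b) = u
    · rw [if_pos h, if_pos h, card_insert_of_notMem (by simp), card_insert_of_notMem (by simp)]
      omega
    · rw [if_neg h, if_neg h, ih]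

private def Ef {V : Type*} [Fintype V] (P : Matrix V V ℝ) (χ : ℕ → V → ℕ)
    (Z : ℕ → V → V → ℕ) (s : ℕ) (v u : V) : ℝ :=
  ∑ t ∈ range s, ((Z t v u : ℝ) - (χ t v : ℝ) * P v u)

private lemma sum_triangle {M : Type*} [AddCommMonoid M] (n : ℕ) (F : ℕ → ℕ → M) :
    ∑ t ∈ range n, ∑ s ∈ range t, F t s = ∑ s ∈ range n, ∑ t ∈ Ico (s + 1) n, F t s := by
  induction n with
  | zero => simp
  | succ n ih =>
    rw [Finset.sum_range_succ, ih,
      Finset.sum_range_succ (fun s => ∑ t ∈ Ico (s + 1) (n + 1), F t s)]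
    rw [Finset.Ico_self, Finset.sum_empty, add_zero]
    have h : ∀ s ∈ range n, ∑ t ∈ Ico (s + 1) (n + 1), F t s
        = ∑ t ∈ Ico (s + 1) n, F t s + F n s := by
      intro s hs
      rw [mem_range] at hs
      exact Finset.sum_Ico_succ_top (by omega) _
    rw [Finset.sum_congr rfl h, Finset.sum_add_distrib]

set_option maxHeartbeats 1000000 in
/-- Theorem 1 (visit frequency): for ergodic reversible `P`,
`|X_w^{(T)} − M_w^{(T)}| ≤ 3 π_w t* max_u (δ(u)/π_u)`. -/
theorem srt_visit_frequency {V : Type*} [Fintype V] [DecidableEq V] [Nonempty V]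
    (P : Matrix V V ℝ) (π : V → ℝ)
    (hP0 : ∀ u v, 0 ≤ P u v) (hP1 : ∀ u, ∑ v, P u v = 1)
    (herg : ∃ t0 : ℕ, ∀ u v, 0 < (P ^ t0) u v)
    (hπpos : ∀ v, 0 < π v) (hπ1 : ∑ v, π v = 1)
    (hstat : ∀ v, ∑ u, π u * P u v = π v)
    (hrev : ∀ u v, π u * P u v = π v * P v u)
    (tstar : ℕ)
    (htstar : tstar = univ.sup fun u =>
      sInf {t : ℕ | (1 / 2) * ∑ v, |(P ^ t) u v - π v| ≤ (1 / 4 : ℝ)})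
    (σ : V → ℕ → V)
    (hσ : ∀ v u (z : ℕ), 0 < z →
      |(((range z).filter (fun j => σ v j = u)).card : ℝ) - (z : ℝ) * P v u| < 1)
    (χ : ℕ → V → ℕ) (X : ℕ → V → ℕ)
    (hX : ∀ t v, X t v = ∑ s ∈ range t, χ s v)
    (Z : ℕ → V → V → ℕ)
    (hZ : ∀ t v u, Z t v u = ((range (χ t v)).filter (fun j => σ v (X t v + j) = u)).card)
    (hrec : ∀ t u, χ (t + 1) u = ∑ v, Z t v u)
    (μ0 : V → ℝ) (hμ0 : ∀ v, μ0 v = χ 0 v)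
    (w : V) (T : ℕ) (hT : 0 < T) :
    |(X T w : ℝ) - ∑ t ∈ range T, ∑ u, μ0 u * (P ^ t) u w| ≤
      3 * π w * tstar *
        univ.sup' univ_nonempty
          (fun u => ((univ.filter fun x => 0 < P u x).card : ℝ) / π u) := by
  -- basic bookkeeping
  have hXsucc : ∀ t v, X (t + 1) v = X t v + χ t v := by
    intro t v; rw [hX, hX, Finset.sum_range_succ]
  have hX0 : ∀ v, X 0 v = 0 := by intro v; rw [hX]; simp
  have hZcum : ∀ s v u, ∑ t ∈ range s, Z t v u = cntf σ v u (X s v) := by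
    intro s v u
    induction s with
    | zero => simp [cntf, hX0]
    | succ s ih =>
      rw [Finset.sum_range_succ, ih, hXsucc, cntf_add, hZ]
  have hE0 : ∀ v u, Ef P χ Z 0 v u = 0 := by intro v u; simp [Ef]
  have hEsucc : ∀ s v u, Ef P χ Z (s + 1) v u
      = Ef P χ Z s v u + ((Z s v u : ℝ) - (χ s v : ℝ) * P v u) := by
    intro s v u; rw [Ef, Finset.sum_range_succ]; rfl
  have hEeq : ∀ s v u, Ef P χ Z s v u
      = (cntf σ v u (X s v) : ℝ) - (X s v : ℝ) * P v u := by
    intro s v u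
    rw [Ef, Finset.sum_sub_distrib]
    congr 1
    · rw [← Nat.cast_sum, hZcum]
    · rw [← Finset.sum_mul, ← Nat.cast_sum, ← hX]
  have hEbound : ∀ s v u, |Ef P χ Z s v u| ≤ 1 := by
    intro s v u
    rw [hEeq]
    rcases Nat.eq_zero_or_pos (X s v) with h | h
    · rw [h]; simp [cntf]
    · exact le_of_lt (hσ v u _ h)
  have hEzero : ∀ s v u, P v u = 0 → Ef P χ Z s v u = 0 := by
    intro s v u h0
    rw [hEeq, h0, mul_zero, sub_zero]
    rcases Nat.eq_zero_or_pos (X s v) with h | h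
    · rw [h]; simp [cntf]
    · have hb := hσ v u _ h
      rw [h0, mul_zero, sub_zero] at hb
      rw [abs_of_nonneg (by positivity)] at hb
      have hc2 : ((range (X s v)).filter (fun j => σ v j = u)).card = 0 :=
        Nat.lt_one_iff.mp (by exact_mod_cast hb)
      simp [cntf, hc2]
  have hEusum : ∀ s v, ∑ u, Ef P χ Z s v u = 0 := by
    intro s v
    have h1 : ∑ u, cntf σ v u (X s v) = X s v := by
      unfold cntf
      have h := (Finset.card_eq_sum_card_fiberwise
        (f := σ v) (s := range (X s v)) (t := univ) (fun x _ => mem_univ (σ v x))).symm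
      rwa [Finset.card_range] at h
    calc ∑ u, Ef P χ Z s v u
        = ∑ u, ((cntf σ v u (X s v) : ℝ) - (X s v : ℝ) * P v u) :=
          Finset.sum_congr rfl fun u _ => hEeq s v u
      _ = (∑ u, (cntf σ v u (X s v) : ℝ)) - (X s v : ℝ) * ∑ u, P v u := by
          rw [Finset.sum_sub_distrib, Finset.mul_sum]
      _ = 0 := by rw [← Nat.cast_sum, h1, hP1, mul_one, sub_self]
  -- the main identity for χ
  have hchi : ∀ t w', (χ t w' : ℝ) = (∑ u, μ0 u * (P ^ t) u w')
      + ∑ s ∈ range t, ∑ v, ∑ u,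
        ((Z s v u : ℝ) - (χ s v : ℝ) * P v u) * (P ^ (t - 1 - s)) u w' := by
    intro t
    induction t with
    | zero =>
      intro w'
      simp only [pow_zero, range_zero, sum_empty, add_zero, Matrix.one_apply, mul_ite,
        mul_one, mul_zero, Finset.sum_ite_eq', mem_univ, if_true]
      rw [hμ0]
    | succ t ih =>
      intro w'
      have h1 : (χ (t + 1) w' : ℝ)
          = ∑ v, ((χ t v : ℝ) * P v w' + ((Z t v w' : ℝ) - (χ t v : ℝ) * P v w')) := by
        rw [hrec]
        push_cast
        exact Finset.sum_congr rfl fun v _ => by ring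
      have h2a : ∑ v, (∑ u, μ0 u * (P ^ t) u v) * P v w'
          = ∑ u, μ0 u * (P ^ (t + 1)) u w' := by
        calc ∑ v, (∑ u, μ0 u * (P ^ t) u v) * P v w'
            = ∑ v, ∑ u, μ0 u * (P ^ t) u v * P v w' :=
              Finset.sum_congr rfl fun v _ => by rw [Finset.sum_mul]
          _ = ∑ u, ∑ v, μ0 u * (P ^ t) u v * P v w' := Finset.sum_comm
          _ = ∑ u, μ0 u * (P ^ (t + 1)) u w' := by
              refine Finset.sum_congr rfl fun u _ => ?_
              rw [pow_succ, Matrix.mul_apply, Finset.mul_sum]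
              exact Finset.sum_congr rfl fun v _ => by ring
      have h2b : ∑ v, (∑ s ∈ range t, ∑ v', ∑ u,
            ((Z s v' u : ℝ) - (χ s v' : ℝ) * P v' u) * (P ^ (t - 1 - s)) u v) * P v w'
          = ∑ s ∈ range t, ∑ v', ∑ u,
            ((Z s v' u : ℝ) - (χ s v' : ℝ) * P v' u) * (P ^ (t - s)) u w' := by
        simp only [Finset.sum_mul]
        rw [Finset.sum_comm]
        refine Finset.sum_congr rfl fun s hs => ?_
        rw [Finset.sum_comm]
        refine Finset.sum_congr rfl fun v' _ => ?_
        rw [Finset.sum_comm]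
        refine Finset.sum_congr rfl fun u _ => ?_
        rw [mem_range] at hs
        have hexp : t - 1 - s + 1 = t - s := by omega
        rw [← hexp, pow_succ, Matrix.mul_apply, Finset.mul_sum]
        exact Finset.sum_congr rfl fun v _ => by ring
      rw [h1, Finset.sum_add_distrib]
      have hihsum : ∀ v, (χ t v : ℝ) * P v w'
          = ((∑ u, μ0 u * (P ^ t) u v)
            + ∑ s ∈ range t, ∑ v', ∑ u,
              ((Z s v' u : ℝ) - (χ s v' : ℝ) * P v' u) * (P ^ (t - 1 - s)) u v) * P v w' := by
        intro v; rw [← ih v]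
      rw [Finset.sum_congr rfl fun v _ => hihsum v]
      simp only [add_mul]
      rw [Finset.sum_add_distrib, h2a, h2b]
      -- now handle RHS
      conv_rhs => rw [Finset.sum_range_succ]
      simp only [Nat.add_sub_cancel, Nat.sub_self, pow_zero, Matrix.one_apply, mul_ite,
        mul_one, mul_zero, Finset.sum_ite_eq', mem_univ, if_true]
      ring
  obtain ⟨T', rfl⟩ := Nat.exists_eq_succ_of_ne_zero (Nat.pos_iff_ne_zero.mp hT)
  have hD : (X (T' + 1) w : ℝ) - ∑ t ∈ range (T' + 1), ∑ u, μ0 u * (P ^ t) u w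
      = ∑ t ∈ range (T' + 1), ∑ s ∈ range t, ∑ v, ∑ u,
          ((Z s v u : ℝ) - (χ s v : ℝ) * P v u) * (P ^ (t - 1 - s)) u w := by
    rw [hX]
    push_cast
    rw [← Finset.sum_sub_distrib]
    refine Finset.sum_congr rfl fun t _ => ?_
    rw [hchi t w]
    ring
  have hD2 : ∑ t ∈ range (T' + 1), ∑ s ∈ range t, ∑ v, ∑ u,
        ((Z s v u : ℝ) - (χ s v : ℝ) * P v u) * (P ^ (t - 1 - s)) u w
      = ∑ v, ∑ u, ∑ s ∈ range (T' + 1),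
        ((Z s v u : ℝ) - (χ s v : ℝ) * P v u) * ∑ r ∈ range (T' - s), (P ^ r) u w := by
    rw [sum_triangle]
    have hstep : ∀ s ∈ range (T' + 1), ∑ t ∈ Ico (s + 1) (T' + 1), ∑ v, ∑ u,
          ((Z s v u : ℝ) - (χ s v : ℝ) * P v u) * (P ^ (t - 1 - s)) u w
        = ∑ v, ∑ u, ((Z s v u : ℝ) - (χ s v : ℝ) * P v u)
            * ∑ r ∈ range (T' - s), (P ^ r) u w := by
      intro s _
      rw [Finset.sum_Ico_eq_sum_range]
      have hlen : T' + 1 - (s + 1) = T' - s := by omega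
      rw [hlen]
      have hterm : ∀ i ∈ range (T' - s), ∑ v, ∑ u,
            ((Z s v u : ℝ) - (χ s v : ℝ) * P v u) * (P ^ (s + 1 + i - 1 - s)) u w
          = ∑ v, ∑ u, ((Z s v u : ℝ) - (χ s v : ℝ) * P v u) * (P ^ i) u w := by
        intro i _
        have hi : s + 1 + i - 1 - s = i := by omega
        rw [hi]
      rw [Finset.sum_congr rfl hterm, Finset.sum_comm]
      refine Finset.sum_congr rfl fun v _ => ?_
      rw [Finset.sum_comm]
      refine Finset.sum_congr rfl fun u _ => ?_
      rw [Finset.mul_sum]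
    rw [Finset.sum_congr rfl hstep, Finset.sum_comm]
    exact Finset.sum_congr rfl fun v _ => Finset.sum_comm
  have habel : ∀ v u, ∑ s ∈ range (T' + 1),
      ((Z s v u : ℝ) - (χ s v : ℝ) * P v u) * ∑ r ∈ range (T' - s), (P ^ r) u w
      = ∑ i ∈ range T', Ef P χ Z (i + 1) v u * (P ^ (T' - 1 - i)) u w := by
    intro v u
    have hef : ∀ s, ((Z s v u : ℝ) - (χ s v : ℝ) * P v u)
        = Ef P χ Z (s + 1) v u - Ef P χ Z s v u := by
      intro s; rw [hEsucc]; ring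
    calc ∑ s ∈ range (T' + 1),
        ((Z s v u : ℝ) - (χ s v : ℝ) * P v u) * ∑ r ∈ range (T' - s), (P ^ r) u w
        = (∑ s ∈ range (T' + 1), Ef P χ Z (s + 1) v u * ∑ r ∈ range (T' - s), (P ^ r) u w)
          - ∑ s ∈ range (T' + 1), Ef P χ Z s v u * ∑ r ∈ range (T' - s), (P ^ r) u w := by
          rw [← Finset.sum_sub_distrib]
          refine Finset.sum_congr rfl fun s _ => ?_
          rw [hef]; ring
      _ = ∑ i ∈ range T', Ef P χ Z (i + 1) v u * (P ^ (T' - 1 - i)) u w := by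
          rw [Finset.sum_range_succ, Finset.sum_range_succ']
          rw [Nat.sub_self, range_zero, sum_empty, mul_zero, add_zero]
          rw [hE0, zero_mul, add_zero, ← Finset.sum_sub_distrib]
          refine Finset.sum_congr rfl fun s hs => ?_
          rw [mem_range] at hs
          have h1 : T' - s = (T' - 1 - s) + 1 := by omega
          have h2 : T' - (s + 1) = T' - 1 - s := by omega
          rw [h1, Finset.sum_range_succ, h2]
          ring
  have hπsub : ∀ v, ∑ u, ∑ i ∈ range T', Ef P χ Z (i + 1) v u * (P ^ (T' - 1 - i)) u w
      = ∑ u, ∑ i ∈ range T', Ef P χ Z (i + 1) v u * ((P ^ (T' - 1 - i)) u w - π w) := by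
    intro v
    rw [← sub_eq_zero, ← Finset.sum_sub_distrib]
    have hdiff : ∀ u : V, (∑ i ∈ range T', Ef P χ Z (i + 1) v u * (P ^ (T' - 1 - i)) u w)
        - ∑ i ∈ range T', Ef P χ Z (i + 1) v u * ((P ^ (T' - 1 - i)) u w - π w)
        = ∑ i ∈ range T', Ef P χ Z (i + 1) v u * π w := by
      intro u
      rw [← Finset.sum_sub_distrib]
      exact Finset.sum_congr rfl fun i _ => by ring
    rw [Finset.sum_congr rfl fun u _ => hdiff u, Finset.sum_comm]
    refine Finset.sum_eq_zero fun i _ => ?_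
    rw [← Finset.sum_mul, hEusum, zero_mul]
  have hWnn : ∀ u : V, 0 ≤ ∑ r ∈ range T', |(P ^ r) u w - π w| :=
    fun u => Finset.sum_nonneg fun r _ => abs_nonneg _
  have hvu : ∀ v u, |∑ i ∈ range T', Ef P χ Z (i + 1) v u * ((P ^ (T' - 1 - i)) u w - π w)|
      ≤ if 0 < P v u then ∑ r ∈ range T', |(P ^ r) u w - π w| else 0 := by
    intro v u
    by_cases hp : 0 < P v u
    · rw [if_pos hp]
      refine (Finset.abs_sum_le_sum_abs _ _).trans ?_
      have hterm : ∀ i ∈ range T', |Ef P χ Z (i + 1) v u * ((P ^ (T' - 1 - i)) u w - π w)|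
          ≤ |(P ^ (T' - 1 - i)) u w - π w| := by
        intro i _
        rw [abs_mul]
        calc |Ef P χ Z (i + 1) v u| * |(P ^ (T' - 1 - i)) u w - π w|
            ≤ 1 * |(P ^ (T' - 1 - i)) u w - π w| :=
              mul_le_mul_of_nonneg_right (hEbound _ v u) (abs_nonneg _)
          _ = |(P ^ (T' - 1 - i)) u w - π w| := one_mul _
      refine (Finset.sum_le_sum hterm).trans ?_
      rw [← Finset.sum_range_reflect (fun r => |(P ^ r) u w - π w|) T']
    · rw [if_neg hp]
      have hp0 : P v u = 0 := le_antisymm (not_lt.mp hp) (hP0 v u)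
      have hzero : ∀ i ∈ range T',
          Ef P χ Z (i + 1) v u * ((P ^ (T' - 1 - i)) u w - π w) = 0 := by
        intro i _
        rw [hEzero _ v u hp0, zero_mul]
      rw [Finset.sum_eq_zero hzero, abs_zero]
  have hDbound : |(X (T' + 1) w : ℝ) - ∑ t ∈ range (T' + 1), ∑ u, μ0 u * (P ^ t) u w|
      ≤ ∑ u, ((univ.filter fun v => 0 < P v u).card : ℝ)
          * ∑ r ∈ range T', |(P ^ r) u w - π w| := by
    rw [hD, hD2]
    have e1 : ∑ v, ∑ u, ∑ s ∈ range (T' + 1),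
          ((Z s v u : ℝ) - (χ s v : ℝ) * P v u) * ∑ r ∈ range (T' - s), (P ^ r) u w
        = ∑ v, ∑ u, ∑ i ∈ range T',
            Ef P χ Z (i + 1) v u * ((P ^ (T' - 1 - i)) u w - π w) := by
      refine Finset.sum_congr rfl fun v _ => ?_
      rw [Finset.sum_congr rfl fun u _ => habel v u, hπsub v]
    rw [e1]
    calc |∑ v, ∑ u, ∑ i ∈ range T', Ef P χ Z (i + 1) v u * ((P ^ (T' - 1 - i)) u w - π w)|
        ≤ ∑ v, ∑ u, |∑ i ∈ range T', Ef P χ Z (i + 1) v u * ((P ^ (T' - 1 - i)) u w - π w)| :=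
          (Finset.abs_sum_le_sum_abs _ _).trans
            (Finset.sum_le_sum fun v _ => Finset.abs_sum_le_sum_abs _ _)
      _ ≤ ∑ v, ∑ u : V, if 0 < P v u then ∑ r ∈ range T', |(P ^ r) u w - π w| else 0 :=
          Finset.sum_le_sum fun v _ => Finset.sum_le_sum fun u _ => hvu v u
      _ = ∑ u, ∑ v : V, if 0 < P v u then ∑ r ∈ range T', |(P ^ r) u w - π w| else 0 :=
          Finset.sum_comm
      _ = ∑ u, ((univ.filter fun v => 0 < P v u).card : ℝ)
            * ∑ r ∈ range T', |(P ^ r) u w - π w| := by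
          refine Finset.sum_congr rfl fun u _ => ?_
          rw [← Finset.sum_filter, Finset.sum_const, nsmul_eq_mul]
  have hdeg : ∀ u, (univ.filter fun v => 0 < P v u).card
      = (univ.filter fun x => 0 < P u x).card := by
    intro u
    congr 1
    refine Finset.filter_congr fun v _ => ?_
    have h := hrev v u
    constructor
    · intro h1; nlinarith [hπpos v, hπpos u, mul_pos (hπpos v) h1]
    · intro h1; nlinarith [hπpos v, hπpos u, mul_pos (hπpos u) h1]
  set K := univ.sup' univ_nonempty
      (fun u => ((univ.filter fun x => 0 < P u x).card : ℝ) / π u) with hKdef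
  have hKle : ∀ u, ((univ.filter fun x => 0 < P u x).card : ℝ) / π u ≤ K := by
    intro u
    rw [hKdef]
    exact Finset.le_sup' (fun u => ((univ.filter fun x => 0 < P u x).card : ℝ) / π u) (mem_univ u)
  have hK0 : 0 ≤ K := by
    obtain ⟨u0⟩ := ‹Nonempty V›
    exact le_trans (div_nonneg (Nat.cast_nonneg _) (hπpos u0).le) (hKle u0)
  have hπW : ∑ u, π u * ∑ r ∈ range T', |(P ^ r) u w - π w|
      = π w * ∑ r ∈ range T', ∑ y, |(P ^ r) w y - π y| := by
    calc ∑ u, π u * ∑ r ∈ range T', |(P ^ r) u w - π w|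
        = ∑ u, ∑ r ∈ range T', π u * |(P ^ r) u w - π w| :=
          Finset.sum_congr rfl fun u _ => Finset.mul_sum _ _ _
      _ = ∑ r ∈ range T', ∑ u, π u * |(P ^ r) u w - π w| := Finset.sum_comm
      _ = ∑ r ∈ range T', ∑ u, π w * |(P ^ r) w u - π u| := by
          refine Finset.sum_congr rfl fun r _ => Finset.sum_congr rfl fun u _ => ?_
          have h1 : π u * |(P ^ r) u w - π w| = |π u * ((P ^ r) u w - π w)| := by
            rw [abs_mul, abs_of_pos (hπpos u)]
          have h2 : π w * |(P ^ r) w u - π u| = |π w * ((P ^ r) w u - π u)| := by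
            rw [abs_mul, abs_of_pos (hπpos w)]
          rw [h1, h2]
          congr 1
          rw [mul_sub, mul_sub, rev_pow hrev r u w]
          ring
      _ = π w * ∑ r ∈ range T', ∑ y, |(P ^ r) w y - π y| := by
          rw [Finset.mul_sum]
          exact Finset.sum_congr rfl fun r _ => (Finset.mul_sum _ _ _).symm
  have hsum3 : ∑ r ∈ range T', ∑ y, |(P ^ r) w y - π y| ≤ 3 * tstar :=
    mix_sum_bound hP0 hP1 hπpos hπ1 hstat herg tstar htstar w T'
  have hchain : ∑ u, ((univ.filter fun v => 0 < P v u).card : ℝ)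
        * ∑ r ∈ range T', |(P ^ r) u w - π w| ≤ 3 * π w * tstar * K := by
    calc ∑ u, ((univ.filter fun v => 0 < P v u).card : ℝ)
          * ∑ r ∈ range T', |(P ^ r) u w - π w|
        = ∑ u, (((univ.filter fun x => 0 < P u x).card : ℝ) / π u)
            * (π u * ∑ r ∈ range T', |(P ^ r) u w - π w|) := by
          refine Finset.sum_congr rfl fun u _ => ?_
          rw [hdeg u]
          have hπne : π u ≠ 0 := (hπpos u).ne'
          rw [← mul_assoc, div_mul_cancel₀ _ hπne]
      _ ≤ ∑ u, K * (π u * ∑ r ∈ range T', |(P ^ r) u w - π w|) :=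
          Finset.sum_le_sum fun u _ => mul_le_mul_of_nonneg_right (hKle u)
            (mul_nonneg (hπpos u).le (hWnn u))
      _ = K * ∑ u, π u * ∑ r ∈ range T', |(P ^ r) u w - π w| := by rw [Finset.mul_sum]
      _ = K * (π w * ∑ r ∈ range T', ∑ y, |(P ^ r) w y - π y|) := by rw [hπW]
      _ ≤ K * (π w * (3 * tstar)) := by
          refine mul_le_mul_of_nonneg_left ?_ hK0
          exact mul_le_mul_of_nonneg_left hsum3 (hπpos w).le
      _ = 3 * π w * tstar * K := by ring
  exact hDbound.trans hchain
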